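/- Let c, d ∈ (−1,1) and let r₁ = (1/((1−c²)(1−d²)))·[[cd−1, c(1−cd), d−c],[d−c, 1−cd, cd−1],[0, 1−c², 0]] and r₂ = [[−1−cd, c+d, d(1+cd)],[0, 0, d²−1],[−c−d, 1+cd, 1+cd]]. Then trace(r₁·r₂·r₂)³ · (1−c²)(1−d²)² = 64 · det(r₁·r₂·r₂) and trace(r₁·r₁·r₂)³ · (1−c²)²(1−d²) = 64 · det(r₁·r₁·r₂). -/

import Mathlib

open Matrix

noncomputable def r1 (c d : ℝ) : Matrix (Fin 3) (Fin 3) ℝ :=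
  (1 / ((1 - c^2) * (1 - d^2))) •
    !![c*d - 1, c*(1 - c*d), d - c;
       d - c, 1 - c*d, c*d - 1;
       0, 1 - c^2, 0]

def r2 (c d : ℝ) : Matrix (Fin 3) (Fin 3) ℝ :=
  !![-1 - c*d, c + d, d*(1 + c*d);
     0, 0, d^2 - 1;
     -c - d, 1 + c*d, 1 + c*d]

set_option maxHeartbeats 2000000 in
theorem pappus_tau_formulas (c d : ℝ)
    (hc : c ∈ Set.Ioo (-1 : ℝ) 1) (hd : d ∈ Set.Ioo (-1 : ℝ) 1) :
    (r1 c d * r2 c d * r2 c d).trace ^ 3 * ((1 - c^2) * (1 - d^2)^2)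
        = 64 * (r1 c d * r2 c d * r2 c d).det ∧
    (r1 c d * r1 c d * r2 c d).trace ^ 3 * ((1 - c^2)^2 * (1 - d^2))
        = 64 * (r1 c d * r1 c d * r2 c d).det := by
  obtain ⟨hc1, hc2⟩ := hc
  obtain ⟨hd1, hd2⟩ := hd
  have hcc : (1 : ℝ) - c^2 ≠ 0 := by nlinarith
  have hdd : (1 : ℝ) - d^2 ≠ 0 := by nlinarith
  constructor <;>
  · simp only [r1, r2, Matrix.trace_fin_three, Matrix.det_fin_three, Matrix.smul_mul,
      Matrix.mul_smul, Matrix.smul_apply, Matrix.mul_fin_three,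
      Matrix.cons_val', Matrix.cons_val_zero, Matrix.cons_val_one, Matrix.head_cons,
      Matrix.empty_val', Matrix.cons_val_fin_one, Matrix.head_fin_const,
      Matrix.cons_val_two, Matrix.tail_cons, smul_eq_mul, Matrix.of_apply]
    field_simp
    ring
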